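/- Let φ : E → Ẽ be an extension equivalence between crossed module extensions of G with M, and suppose (Z²,Z¹) is a lifting system for E and (Z̃²,Z̃¹) a lifting system for Ẽ with Z̃¹ = φ₀ ∘ Z¹ and Z̃² = φ₁ ∘ Z². Then the associated 3-cocycles are equal: z³_{Ẽ,(Z̃²,Z̃¹)} = z³_{E,(Z²,Z¹)}. -/
import Mathlib

/-- Let `φ : E → Ẽ` be an extension equivalence between crossed module extensions of `G`
with `M`, and let `(Z², Z¹)`, `(Z̃², Z̃¹)` be lifting systems for `E`, `Ẽ` with
`Z̃¹ = φ₀ ∘ Z¹` and `Z̃² = φ₁ ∘ Z²`. Then the associated 3-cocycles coincide: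
`z³_{Ẽ,(Z̃²,Z̃¹)} = z³_{E,(Z²,Z¹)}`. -/
theorem three_cocycle_compat
    {G M T Γ : Type*} [Group G] [AddCommGroup M] [DistribMulAction G M]
    [Group T] [Group Γ]
    -- the crossed module extension E : M → T → Γ → G with action `act` of Γ on T
    (act : Γ → T → T)
    (hact1 : ∀ g t s, act g (t * s) = act g t * act g s)
    (hact2 : ∀ t, act 1 t = t)
    (hact3 : ∀ g h t, act (g * h) t = act g (act h t))
    (ι : M → T) (μ : T →* Γ) (π : Γ →* G)
    (hι : Function.Injective ι)
    (hιadd : ∀ a b, ι (a + b) = ι a * ι b)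
    (hequi : ∀ g t, μ (act g t) = g * μ t * g⁻¹)
    (hpeif : ∀ t s, act (μ s) t = s * t * s⁻¹)
    (hexact₁ : ∀ t : T, μ t = 1 ↔ ∃ m, ι m = t)
    (hexact₂ : ∀ g : Γ, π g = 1 ↔ ∃ t, μ t = g)
    (hπ : Function.Surjective π)
    (hcompat : ∀ (e : Γ) (m : M), act e (ι m) = ι (π e • m))
    {T' Γ' : Type*} [Group T'] [Group Γ']
    -- the crossed module extension E : M → T' → Γ' → G with act'ion `act'` of Γ' on T'
    (act' : Γ' → T' → T')
    (hact'1 : ∀ g t s, act' g (t * s) = act' g t * act' g s)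
    (hact'2 : ∀ t, act' 1 t = t)
    (hact'3 : ∀ g h t, act' (g * h) t = act' g (act' h t))
    (ι' : M → T') (μ' : T' →* Γ') (π' : Γ' →* G)
    (hι'' : Function.Injective ι')
    (hι''add : ∀ a b, ι' (a + b) = ι' a * ι' b)
    (hequi' : ∀ g t, μ' (act' g t) = g * μ' t * g⁻¹)
    (hpeif' : ∀ t s, act' (μ' s) t = s * t * s⁻¹)
    (hexact''₁ : ∀ t : T', μ' t = 1 ↔ ∃ m, ι' m = t)
    (hexact''₂ : ∀ g : Γ', π' g = 1 ↔ ∃ t, μ' t = g)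
    (hπ' : Function.Surjective π')
    (hcompat' : ∀ (e : Γ') (m : M), act' e (ι' m) = ι' (π' e • m))
    -- an extension equivalence φ = (φ₁, φ₀) : E → Ẽ
    (φ₀ : Γ →* Γ') (φ₁ : T →* T')
    (hφι : ∀ m, φ₁ (ι m) = ι' m)
    (hφμ : ∀ t, μ' (φ₁ t) = φ₀ (μ t))
    (hφπ : ∀ g, π' (φ₀ g) = π g)
    (hφact : ∀ g t, φ₁ (act g t) = act' (φ₀ g) (φ₁ t))
    -- a lifting system (Z², Z¹) for E
    (Z1 : G → Γ) (hZ1 : ∀ g, π (Z1 g) = g) (hZ1pt : Z1 1 = 1)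
    (Z2 : G → G → T)
    (hZ2 : ∀ h g, μ (Z2 h g) = Z1 h * Z1 g * (Z1 (h * g))⁻¹)
    (hZ2pt : ∀ g, Z2 1 g = 1 ∧ Z2 g 1 = 1)
    (Z1' : G → Γ') (hZ1'sec : ∀ g, π' (Z1' g) = g) (hZ1'pt : Z1' 1 = 1)
    (Z2' : G → G → T')
    (hZ2'lift : ∀ h g, μ' (Z2' h g) = Z1' h * Z1' g * (Z1' (h * g))⁻¹)
    (hZ2'pt : ∀ g, Z2' 1 g = 1 ∧ Z2' g 1 = 1)
    (hrel1 : ∀ g, Z1' g = φ₀ (Z1 g))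
    (hrel2 : ∀ h g, Z2' h g = φ₁ (Z2 h g))
    (z3 z3' : G → G → G → M)
    (hz3 : ∀ k h g,
      ι (z3 k h g) =
        Z2 k h * Z2 (k * h) g * (Z2 k (h * g))⁻¹ * (act (Z1 k) (Z2 h g))⁻¹)
    (hz3' : ∀ k h g,
      ι' (z3' k h g) =
        Z2' k h * Z2' (k * h) g * (Z2' k (h * g))⁻¹ * (act' (Z1' k) (Z2' h g))⁻¹) :
    z3' = z3 := by
  funext k h g
  apply hι''
  rw [hz3' k h g, ← hφι (z3 k h g), hz3 k h g]
  simp only [map_mul, map_inv, hrel1, hrel2, hφact]
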